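/- arXiv:2401.17943 — 2 statements merged into one kernel-verified Lean document; each statement's English description precedes it below -/
import Mathlib

section
/- Let λ > 1, γ ∈ (0,1), τ > 0, and 0 < 𝚙 < 1/(τ+2), and let ω ∈ ℝ² satisfy |ω·k| ≥ γ|k|^{-τ} for all nonzero k ∈ ℤ². Then there is a constant C (independent of λ, γ, ω) such that for every s ≥ 0 and every zero-average function h ∈ H^s(𝕋²), the unique zero-average solution v of (λω·∇ − Δ)v = h satisfies ‖v‖_{s+1} ≤ C γ^{-1} λ^{-𝚙} ‖h‖_s, where ‖u‖_s² = Σ_{k∈ℤ²} ⟨k⟩^{2s}|û(k)|². -/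
/-- The Euclidean norm of a Fourier mode `k ∈ ℤ²`. -/
noncomputable def knorm (k : ℤ × ℤ) : ℝ := Real.sqrt ((k.1 : ℝ)^2 + (k.2 : ℝ)^2)

/-- The scalar product `ω · k` for `ω ∈ ℝ²`, `k ∈ ℤ²`. -/
noncomputable def wdot (ω : ℝ × ℝ) (k : ℤ × ℤ) : ℝ := ω.1 * (k.1 : ℝ) + ω.2 * (k.2 : ℝ)

/-- The eigenvalue `Λ(k) = iλ(ω·k) + |k|²` of the operator `λω·∇ − Δ`. -/
noncomputable def Lam (lam : ℝ) (ω : ℝ × ℝ) (k : ℤ × ℤ) : ℂ :=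
  Complex.I * ((lam * wdot ω k : ℝ) : ℂ) + (((k.1 : ℝ)^2 + (k.2 : ℝ)^2 : ℝ) : ℂ)

/-- The Japanese bracket squared `⟨k⟩² = 1 + |k|²`. -/
noncomputable def jap (k : ℤ × ℤ) : ℝ := 1 + (k.1 : ℝ)^2 + (k.2 : ℝ)^2

/-- The Sobolev `H^s(𝕋²)` norm of a function given by its Fourier coefficients `u : ℤ² → ℂ`:
`‖u‖_s = (Σ_k ⟨k⟩^{2s} |û(k)|²)^{1/2}`. -/
noncomputable def Hnorm (s : ℝ) (u : ℤ × ℤ → ℂ) : ℝ :=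
  Real.sqrt (∑' k : ℤ × ℤ, jap k ^ s * ‖u k‖ ^ 2)

lemma jap_pos (k : ℤ × ℤ) : 0 < jap k := by unfold jap; positivity

lemma central_bound (lam γ τ p : ℝ) (ω : ℝ × ℝ) (k : ℤ × ℤ) (hk : k ≠ 0)
    (hlam : 1 < lam) (hγ0 : 0 < γ) (hγ1 : γ < 1) (hτ : 0 < τ) (hp : 0 < p)
    (hpτ : p < 1 / (τ + 2))
    (hd : γ * knorm k ^ (-τ) ≤ |wdot ω k|) :
    jap k ≤ (2 * γ⁻¹ * lam ^ (-p))^2 * ((lam * wdot ω k)^2 + ((k.1:ℝ)^2 + (k.2:ℝ)^2)^2) := by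
  have hlam0 : (0:ℝ) < lam := by linarith
  set a : ℝ := (k.1:ℝ)^2 + (k.2:ℝ)^2 with ha_def
  set d : ℝ := wdot ω k with hd_def
  clear_value a d
  have ha1 : (1:ℝ) ≤ a := by
    have h2 : k.1 ≠ 0 ∨ k.2 ≠ 0 := by
      by_contra hcon; push_neg at hcon
      exact hk (Prod.ext hcon.1 hcon.2)
    have h1 : (1:ℤ) ≤ k.1^2 + k.2^2 := by
      rcases h2 with h | h
      · nlinarith [Int.one_le_abs h, sq_abs k.1, sq_nonneg k.2, abs_nonneg k.1]
      · nlinarith [Int.one_le_abs h, sq_abs k.2, sq_nonneg k.1, abs_nonneg k.2]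
    have : ((1:ℤ):ℝ) ≤ ((k.1^2 + k.2^2 : ℤ):ℝ) := by exact_mod_cast h1
    push_cast at this; linarith
  have ha0 : (0:ℝ) < a := by linarith
  have hγi : (1:ℝ) ≤ γ⁻¹ := by
    have := mul_inv_cancel₀ hγ0.ne'
    nlinarith [inv_pos.mpr hγ0]
  have hjap : jap k = 1 + a := by unfold jap; rw [ha_def]; ring
  have hKsq : (2 * γ⁻¹ * lam ^ (-p))^2 = 4 * γ⁻¹^2 * lam ^ (-(2*p)) := by
    have : (lam ^ (-p))^2 = lam ^ (-(2*p)) := by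
      rw [sq, ← Real.rpow_add hlam0]; congr 1; ring
    rw [mul_pow, mul_pow, this]; ring
  rw [hjap, hKsq]
  have hpτ' : p * (τ + 2) < 1 := by
    rw [lt_div_iff₀ (by linarith : (0:ℝ) < τ + 2)] at hpτ; exact hpτ
  by_cases hcase : lam ^ (2*p) ≤ a
  · -- high frequency
    have hinv : lam ^ (-(2*p)) * lam ^ (2*p) = 1 := by
      rw [← Real.rpow_add hlam0]; norm_num
    have hLpos : (0:ℝ) < lam ^ (-(2*p)) := Real.rpow_pos_of_pos hlam0 _
    have step : a ≤ lam ^ (-(2*p)) * a^2 := by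
      calc a = (lam ^ (-(2*p)) * lam ^ (2*p)) * a := by rw [hinv, one_mul]
        _ = lam ^ (-(2*p)) * (lam ^ (2*p) * a) := by ring
        _ ≤ lam ^ (-(2*p)) * (a * a) :=
            mul_le_mul_of_nonneg_left (mul_le_mul_of_nonneg_right hcase ha0.le) hLpos.le
        _ = lam ^ (-(2*p)) * a^2 := by ring
    have t1 : a ≤ lam ^ (-(2*p)) * ((lam * d)^2 + a^2) := by
      nlinarith [step, mul_nonneg hLpos.le (sq_nonneg (lam * d))]
    have hγsq : (1:ℝ) ≤ γ⁻¹^2 := by nlinarith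
    have hterm : (0:ℝ) ≤ lam ^ (-(2*p)) * ((lam * d)^2 + a^2) := by
      have : (0:ℝ) ≤ (lam * d)^2 + a^2 := by positivity
      exact mul_nonneg hLpos.le this
    have t3 := mul_nonneg (by linarith : (0:ℝ) ≤ γ⁻¹^2 - 1) hterm
    have expand : 4 * γ⁻¹^2 * lam ^ (-(2*p)) * ((lam * d)^2 + a^2)
        = 4 * ((γ⁻¹^2 - 1) * (lam ^ (-(2*p)) * ((lam * d)^2 + a^2)))
          + 4 * (lam ^ (-(2*p)) * ((lam * d)^2 + a^2)) := by ring
    rw [expand]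
    linarith [t1, t3, hterm]
  · push_neg at hcase
    have hsqrt_pos : 0 < Real.sqrt a := Real.sqrt_pos.mpr ha0
    have hX : ((Real.sqrt a) ^ (-τ))^2 = a ^ (-τ) := by
      rw [sq, ← Real.rpow_add hsqrt_pos, Real.sqrt_eq_rpow, ← Real.rpow_mul ha0.le]
      congr 1; ring
    have hdsq : γ^2 * a ^ (-τ) ≤ d^2 := by
      have hknorm : knorm k = Real.sqrt a := by unfold knorm; rw [ha_def]
      rw [hknorm] at hd
      have h2 : (γ * (Real.sqrt a) ^ (-τ))^2 ≤ |d|^2 :=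
        pow_le_pow_left₀ (mul_nonneg hγ0.le (Real.rpow_nonneg (Real.sqrt_nonneg a) _)) hd 2
      rw [mul_pow, hX, sq_abs] at h2; exact h2
    have e1 : a ^ (1+τ) ≤ lam ^ (2 - 2*p) := by
      calc a ^ (1+τ) ≤ (lam ^ (2*p)) ^ (1+τ) :=
            Real.rpow_le_rpow ha0.le hcase.le (by linarith)
        _ = lam ^ (2*p*(1+τ)) := by rw [← Real.rpow_mul hlam0.le]
        _ ≤ lam ^ (2 - 2*p) := Real.rpow_le_rpow_of_exponent_le hlam.le (by nlinarith)
    have ea : a ^ (1+τ) * a ^ (-τ) = a := by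
      rw [← Real.rpow_add ha0]; norm_num
    have hAτ : (0:ℝ) ≤ a ^ (-τ) := Real.rpow_nonneg ha0.le _
    have A3 : a ≤ lam ^ (2-2*p) * a ^ (-τ) := by
      calc a = a ^ (1+τ) * a ^ (-τ) := ea.symm
        _ ≤ lam ^ (2-2*p) * a ^ (-τ) := mul_le_mul_of_nonneg_right e1 hAτ
    have hc : lam ^ (-(2*p)) * lam ^ (2:ℕ) = lam ^ (2 - 2*p) := by
      rw [← Real.rpow_natCast lam 2, ← Real.rpow_add hlam0]; congr 1; push_cast; ring
    have A4 : γ⁻¹^2 * γ^2 = 1 := by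
      rw [← mul_pow, inv_mul_cancel₀ hγ0.ne']; norm_num
    have B2 : γ⁻¹^2 * lam ^ (-(2*p)) * (lam^2 * (γ^2 * a ^ (-τ))) = lam ^ (2-2*p) * a ^ (-τ) := by
      calc γ⁻¹^2 * lam ^ (-(2*p)) * (lam^2 * (γ^2 * a ^ (-τ)))
          = (γ⁻¹^2 * γ^2) * ((lam ^ (-(2*p)) * lam^(2:ℕ)) * a ^ (-τ)) := by ring
        _ = lam ^ (2-2*p) * a ^ (-τ) := by rw [A4, hc, one_mul]
    have B3 : lam^2 * (γ^2 * a ^ (-τ)) ≤ (lam * d)^2 := by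
      rw [mul_pow]; exact mul_le_mul_of_nonneg_left hdsq (sq_nonneg lam)
    have hLpos : (0:ℝ) < lam ^ (-(2*p)) := Real.rpow_pos_of_pos hlam0 _
    calc 1 + a ≤ 4 * a := by linarith
      _ ≤ 4 * (lam ^ (2-2*p) * a ^ (-τ)) := by linarith
      _ = 4 * (γ⁻¹^2 * lam ^ (-(2*p)) * (lam^2 * (γ^2 * a ^ (-τ)))) := by rw [B2]
      _ ≤ 4 * (γ⁻¹^2 * lam ^ (-(2*p)) * (lam * d)^2) := by
          have hpos : (0:ℝ) ≤ γ⁻¹^2 * lam ^ (-(2*p)) := by positivity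
          have := mul_le_mul_of_nonneg_left B3 hpos
          linarith
      _ ≤ 4 * γ⁻¹^2 * lam ^ (-(2*p)) * ((lam * d)^2 + a^2) := by
          have h1 : (0:ℝ) ≤ 4 * γ⁻¹^2 * lam ^ (-(2*p)) * a^2 := by positivity
          linarith


theorem stmt2 :
    ∃ C > (0 : ℝ), ∀ (lam γ τ p s : ℝ) (ω : ℝ × ℝ) (h v : ℤ × ℤ → ℂ),
      1 < lam → γ ∈ Set.Ioo (0 : ℝ) 1 → 0 < τ → 0 < p → p < 1 / (τ + 2) → 0 ≤ s →
      (∀ k : ℤ × ℤ, k ≠ 0 → γ * knorm k ^ (-τ) ≤ |wdot ω k|) →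
      -- `h ∈ H^s(𝕋²)` with zero average
      h 0 = 0 → Summable (fun k : ℤ × ℤ => jap k ^ s * ‖h k‖ ^ 2) →
      -- `v` is the (unique) zero-average solution of `(λω·∇ − Δ) v = h`
      v 0 = 0 → (∀ k : ℤ × ℤ, k ≠ 0 → Lam lam ω k * v k = h k) →
      Hnorm (s + 1) v ≤ C * γ⁻¹ * lam ^ (-p) * Hnorm s h := by
  refine ⟨2, by norm_num, ?_⟩
  intro lam γ τ p s ω h v hlam hγ hτ hp hpτ hs hdio h0 hsum v0 heq
  obtain ⟨hγ0, hγ1⟩ := hγ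
  have hlam0 : (0:ℝ) < lam := by linarith
  have hK0 : (0:ℝ) ≤ 2 * γ⁻¹ * lam ^ (-p) := by positivity
  have key : ∀ k : ℤ × ℤ, jap k ^ (s+1) * ‖v k‖^2
      ≤ (2 * γ⁻¹ * lam ^ (-p))^2 * (jap k ^ s * ‖h k‖^2) := by
    intro k
    rcases eq_or_ne k 0 with rfl | hk
    · rw [v0, h0]; simp
    · have central := central_bound lam γ τ p ω k hk hlam hγ0 hγ1 hτ hp hpτ (hdio k hk)
      have hre : (Lam lam ω k).re = (k.1:ℝ)^2 + (k.2:ℝ)^2 := by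
        simp only [Lam, Complex.add_re, Complex.mul_re, Complex.I_re, Complex.ofReal_re,
          Complex.ofReal_im, Complex.I_im, Complex.add_im, Complex.mul_im]
        ring
      have him : (Lam lam ω k).im = lam * wdot ω k := by
        simp only [Lam, Complex.add_im, Complex.mul_im, Complex.I_re, Complex.ofReal_re,
          Complex.ofReal_im, Complex.I_im, Complex.add_re, Complex.mul_re]
        ring
      have hnormsq : ‖Lam lam ω k‖^2
          = (lam * wdot ω k)^2 + ((k.1:ℝ)^2 + (k.2:ℝ)^2)^2 := by
        rw [Complex.sq_norm, Complex.normSq_apply, hre, him]; ring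
      have hh : ‖h k‖^2 = ((lam * wdot ω k)^2 + ((k.1:ℝ)^2 + (k.2:ℝ)^2)^2) * ‖v k‖^2 := by
        rw [← heq k hk, norm_mul, mul_pow, hnormsq]
      rw [hh, Real.rpow_add (jap_pos k), Real.rpow_one]
      have hnn : (0:ℝ) ≤ jap k ^ s * ‖v k‖^2 :=
        mul_nonneg (Real.rpow_nonneg (jap_pos k).le s) (sq_nonneg _)
      calc jap k ^ s * jap k * ‖v k‖^2
          = (jap k ^ s * ‖v k‖^2) * jap k := by ring
        _ ≤ (jap k ^ s * ‖v k‖^2)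
              * ((2 * γ⁻¹ * lam ^ (-p))^2
                * ((lam * wdot ω k)^2 + ((k.1:ℝ)^2 + (k.2:ℝ)^2)^2)) :=
            mul_le_mul_of_nonneg_left central hnn
        _ = (2 * γ⁻¹ * lam ^ (-p))^2
              * (jap k ^ s * (((lam * wdot ω k)^2 + ((k.1:ℝ)^2 + (k.2:ℝ)^2)^2) * ‖v k‖^2)) := by
            ring
  have hsumB : Summable (fun k : ℤ × ℤ =>
      (2 * γ⁻¹ * lam ^ (-p))^2 * (jap k ^ s * ‖h k‖^2)) := hsum.mul_left _
  have hsumA : Summable (fun k : ℤ × ℤ => jap k ^ (s+1) * ‖v k‖^2) :=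
    Summable.of_nonneg_of_le
      (fun k => mul_nonneg (Real.rpow_nonneg (jap_pos k).le _) (sq_nonneg _)) key hsumB
  have hts : (∑' k : ℤ × ℤ, jap k ^ (s+1) * ‖v k‖^2)
      ≤ (2 * γ⁻¹ * lam ^ (-p))^2 * ∑' k : ℤ × ℤ, jap k ^ s * ‖h k‖^2 := by
    rw [← tsum_mul_left]
    exact Summable.tsum_le_tsum key hsumA hsumB
  unfold Hnorm
  calc Real.sqrt (∑' k : ℤ × ℤ, jap k ^ (s+1) * ‖v k‖^2)
      ≤ Real.sqrt ((2 * γ⁻¹ * lam ^ (-p))^2 * ∑' k : ℤ × ℤ, jap k ^ s * ‖h k‖^2) :=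
        Real.sqrt_le_sqrt hts
    _ = 2 * γ⁻¹ * lam ^ (-p) * Real.sqrt (∑' k : ℤ × ℤ, jap k ^ s * ‖h k‖^2) := by
        rw [Real.sqrt_mul (sq_nonneg _), Real.sqrt_sq hK0]
end

section
/- Let λ > 1, γ ∈ (0,1), τ > 0, s ≥ 0, and let ω ∈ ℝ² satisfy |ω·k| ≥ γ|k|^{-τ} for all nonzero k ∈ ℤ². Then the zero-average solution v of (λω·∇ − Δ)v = h, given by v̂(k) = ĥ(k)/(iλω·k+|k|²), satisfies the loss-of-derivatives estimate ‖v‖_s ≤ C γ^{-1} λ^{-1} ‖h‖_{s+τ} for every zero-average h ∈ H^{s+τ}(𝕋²), with C independent of λ, γ, ω, h. -/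
theorem stmt3 :
    ∃ C > (0 : ℝ), ∀ (lam γ τ s : ℝ) (ω : ℝ × ℝ) (h v : ℤ × ℤ → ℂ),
      1 < lam → γ ∈ Set.Ioo (0 : ℝ) 1 → 0 < τ → 0 ≤ s →
      (∀ k : ℤ × ℤ, k ≠ 0 → γ * knorm k ^ (-τ) ≤ |wdot ω k|) →
      -- `h ∈ H^{s+τ}(𝕋²)` with zero average
      h 0 = 0 → Summable (fun k : ℤ × ℤ => jap k ^ (s + τ) * ‖h k‖ ^ 2) →
      -- `v` is the zero-average solution of `(λω·∇ − Δ) v = h`, i.e. `v̂(k) = ĥ(k)/Λ(k)`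
      v 0 = 0 → (∀ k : ℤ × ℤ, k ≠ 0 → Lam lam ω k * v k = h k) →
      Hnorm s v ≤ C * γ⁻¹ * lam⁻¹ * Hnorm (s + τ) h := by
  refine ⟨1, one_pos, ?_⟩
  intro lam γ τ s ω h v hlam hγ hτ hs hdio h0 hsum v0 hv
  have hlam0 : (0:ℝ) < lam := lt_trans one_pos hlam
  have hγ0 : (0:ℝ) < γ := hγ.1
  set c : ℝ := γ⁻¹ * lam⁻¹ with hc
  have hc0 : 0 < c := mul_pos (inv_pos.2 hγ0) (inv_pos.2 hlam0)
  have key : ∀ k : ℤ × ℤ, jap k ^ s * ‖v k‖^2 ≤ c^2 * (jap k ^ (s+τ) * ‖h k‖^2) := by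
    intro k
    have hjp := jap_pos k
    rcases eq_or_ne k 0 with rfl | hk
    · rw [v0]
      simp only [norm_zero]
      have : (0:ℝ) ≤ jap (0:ℤ×ℤ) ^ (s+τ) * ‖h 0‖^2 := by positivity
      nlinarith [sq_nonneg c]
    · have hk2 : (0:ℝ) < (k.1:ℝ)^2 + (k.2:ℝ)^2 := by
        rcases eq_or_ne k.1 0 with h1 | h1
        · have h2 : k.2 ≠ 0 := fun h2 => hk (Prod.ext h1 h2)
          have h2' : ((k.2:ℝ)) ≠ 0 := Int.cast_ne_zero.mpr h2
          positivity
        · have h1' : ((k.1:ℝ)) ≠ 0 := Int.cast_ne_zero.mpr h1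
          positivity
      have hkn : 0 < knorm k := Real.sqrt_pos.2 hk2
      have hK : 0 < knorm k ^ τ := Real.rpow_pos_of_pos hkn τ
      have him : (Lam lam ω k).im = lam * wdot ω k := by
        simp only [Lam, Complex.add_im, Complex.mul_im, Complex.I_re, Complex.I_im,
          Complex.ofReal_re, Complex.ofReal_im]
        ring
      have hLam : lam * (γ * knorm k ^ (-τ)) ≤ ‖Lam lam ω k‖ := by
        calc lam * (γ * knorm k ^ (-τ)) ≤ lam * |wdot ω k| :=
              mul_le_mul_of_nonneg_left (hdio k hk) hlam0.le
          _ = |(Lam lam ω k).im| := by rw [him, abs_mul, abs_of_pos hlam0]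
          _ ≤ ‖Lam lam ω k‖ := Complex.abs_im_le_norm _
      have hh : ‖h k‖ = ‖Lam lam ω k‖ * ‖v k‖ := by
        rw [← hv k hk]; simp
      have h1 : lam * (γ * knorm k ^ (-τ)) * ‖v k‖ ≤ ‖h k‖ := by
        rw [hh]; exact mul_le_mul_of_nonneg_right hLam (norm_nonneg _)
      have hknτ : knorm k ^ (-τ) = (knorm k ^ τ)⁻¹ := Real.rpow_neg hkn.le τ ▸ rfl
      rw [hknτ] at h1
      have hvb : ‖v k‖ ≤ c * knorm k ^ τ * ‖h k‖ := by
        have h2 := mul_le_mul_of_nonneg_left h1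
          (le_of_lt (by positivity : (0:ℝ) < γ⁻¹ * lam⁻¹ * knorm k ^ τ))
        calc ‖v k‖ = (γ⁻¹ * lam⁻¹ * knorm k ^ τ) * (lam * (γ * (knorm k ^ τ)⁻¹) * ‖v k‖) := by
              field_simp
          _ ≤ (γ⁻¹ * lam⁻¹ * knorm k ^ τ) * ‖h k‖ := h2
          _ = c * knorm k ^ τ * ‖h k‖ := by rw [hc]
      have hK2 : (knorm k ^ τ)^2 ≤ jap k ^ τ := by
        have e1 : (knorm k ^ τ)^2 = ((k.1:ℝ)^2 + (k.2:ℝ)^2) ^ τ := by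
          rw [← Real.rpow_natCast (knorm k ^ τ) 2, ← Real.rpow_mul hkn.le]
          rw [mul_comm, Real.rpow_mul hkn.le]
          congr 1
          rw [show ((2:ℕ):ℝ) = (2:ℝ) by norm_num, Real.rpow_two]
          unfold knorm
          rw [Real.sq_sqrt hk2.le]
        rw [e1]
        apply Real.rpow_le_rpow hk2.le _ hτ.le
        unfold jap; linarith
      have hja : jap k ^ (s+τ) = jap k ^ s * jap k ^ τ := Real.rpow_add hjp s τ
      have hjs : (0:ℝ) ≤ jap k ^ s := (Real.rpow_pos_of_pos hjp s).le
      have hvv : ‖v k‖^2 ≤ c^2 * (knorm k ^ τ)^2 * ‖h k‖^2 := by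
        nlinarith [norm_nonneg (v k), norm_nonneg (h k), hc0.le, hK.le]
      calc jap k ^ s * ‖v k‖^2 ≤ jap k ^ s * (c^2 * (knorm k ^ τ)^2 * ‖h k‖^2) :=
            mul_le_mul_of_nonneg_left hvv hjs
        _ ≤ jap k ^ s * (c^2 * jap k ^ τ * ‖h k‖^2) := by
            exact mul_le_mul_of_nonneg_left
              (mul_le_mul_of_nonneg_right (mul_le_mul_of_nonneg_left hK2 (sq_nonneg c))
                (sq_nonneg _)) hjs
        _ = c^2 * (jap k ^ (s+τ) * ‖h k‖^2) := by rw [hja]; ring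
  have hg : Summable (fun k : ℤ × ℤ => c^2 * (jap k ^ (s+τ) * ‖h k‖^2)) := hsum.mul_left _
  have hf : Summable (fun k : ℤ × ℤ => jap k ^ s * ‖v k‖^2) := by
    apply Summable.of_nonneg_of_le _ key hg
    intro k
    have := jap_pos k
    positivity
  have hts : ∑' k : ℤ × ℤ, jap k ^ s * ‖v k‖^2
      ≤ c^2 * ∑' k : ℤ × ℤ, jap k ^ (s+τ) * ‖h k‖^2 := by
    rw [← tsum_mul_left]
    exact Summable.tsum_le_tsum key hf hg
  unfold Hnorm
  rw [one_mul, ← hc]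
  calc Real.sqrt (∑' k : ℤ × ℤ, jap k ^ s * ‖v k‖^2)
      ≤ Real.sqrt (c^2 * ∑' k : ℤ × ℤ, jap k ^ (s+τ) * ‖h k‖^2) := Real.sqrt_le_sqrt hts
    _ = c * Real.sqrt (∑' k : ℤ × ℤ, jap k ^ (s+τ) * ‖h k‖^2) := by
        rw [Real.sqrt_mul (sq_nonneg c), Real.sqrt_sq hc0.le]
end
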